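/- In the setting of the r-dimensional (H2) construction, for 1 ≤ i < j ≤ r, E[S_i·S_j] = 2 / ((2 + α1 + ··· + α_{r−j+1})(1 + α1 + ··· + α_{r−i+1})). -/

import Mathlib

open MeasureTheory ProbabilityTheory Real Filter
open scoped ENNReal NNReal

/-- The density of a Beta(a,b) random variable on (0,1). -/
noncomputable def betaPDFReal (a b x : ℝ) : ℝ :=
  if 0 < x ∧ x < 1 then
    (Real.Gamma (a + b) / (Real.Gamma a * Real.Gamma b)) * x ^ (a - 1) * (1 - x) ^ (b - 1)
  else 0

/-- The Beta(a,b) probability measure on ℝ. -/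
noncomputable def betaMeasure (a b : ℝ) : Measure ℝ :=
  MeasureTheory.volume.withDensity (fun x => ENNReal.ofReal (_root_.betaPDFReal a b x))

/-- `X` is a beta random variable with parameters `(a, b)` on `(Ω, μ)`. -/
def HasBetaLaw {Ω : Type*} [MeasurableSpace Ω] (μ : Measure Ω) (X : Ω → ℝ) (a b : ℝ) : Prop :=
  Measurable X ∧ μ.map X = _root_.betaMeasure a b

lemma realBetaIntegral {a b : ℝ} (ha : 0 < a) (hb : 0 < b) :
    ∫ x in Set.Ioo (0:ℝ) 1, x ^ (a - 1) * (1 - x) ^ (b - 1) =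
      Real.Gamma a * Real.Gamma b / Real.Gamma (a + b) := by
  have key := Complex.Gamma_mul_Gamma_eq_betaIntegral (s := (a:ℂ)) (t := (b:ℂ))
    (by simpa using ha) (by simpa using hb)
  have hI : Complex.betaIntegral a b =
      ((∫ x in (0:ℝ)..1, x ^ (a - 1) * (1 - x) ^ (b - 1) : ℝ) : ℂ) := by
    rw [Complex.betaIntegral, ← intervalIntegral.integral_ofReal]
    refine intervalIntegral.integral_congr fun x hx => ?_
    rw [Set.uIcc_of_le (by norm_num)] at hx
    push_cast
    rw [Complex.ofReal_cpow hx.1, Complex.ofReal_cpow (by linarith [hx.2])]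
    push_cast
    ring
  rw [hI, Complex.Gamma_ofReal, Complex.Gamma_ofReal, ← Complex.ofReal_add,
    Complex.Gamma_ofReal, ← Complex.ofReal_mul, ← Complex.ofReal_mul] at key
  have key' := Complex.ofReal_injective key
  have hne : Real.Gamma (a + b) ≠ 0 := (Real.Gamma_pos_of_pos (by linarith)).ne'
  have : ∫ x in (0:ℝ)..1, x ^ (a - 1) * (1 - x) ^ (b - 1) =
      Real.Gamma a * Real.Gamma b / Real.Gamma (a + b) := by
    field_simp
    linarith [key']
  rw [← this, intervalIntegral.integral_of_le (by norm_num),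
    MeasureTheory.integral_Ioc_eq_integral_Ioo]

lemma measurable_betaPDFReal (a b : ℝ) : Measurable (_root_.betaPDFReal a b) := by
  unfold _root_.betaPDFReal
  exact Measurable.ite measurableSet_Ioo (by fun_prop) measurable_const

lemma betaPDFReal_nonneg {a b : ℝ} (ha : 0 < a) (hb : 0 < b) (x : ℝ) :
    0 ≤ _root_.betaPDFReal a b x := by
  unfold _root_.betaPDFReal
  split_ifs with h
  · have := Real.Gamma_pos_of_pos ha
    have := Real.Gamma_pos_of_pos hb
    have := Real.Gamma_pos_of_pos (add_pos ha hb)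
    have h1 : (0:ℝ) ≤ x ^ (a-1) := Real.rpow_nonneg h.1.le _
    have h2 : (0:ℝ) ≤ (1-x) ^ (b-1) := Real.rpow_nonneg (by linarith [h.2]) _
    positivity
  · exact le_refl _

lemma betaMeasure_moment {a b : ℝ} (ha : 0 < a) (hb : 0 < b) (m : ℕ) :
    ∫ x, x ^ m ∂(_root_.betaMeasure a b) =
      Real.Gamma (a + m) * Real.Gamma (a + b) /
        (Real.Gamma a * Real.Gamma (a + b + m)) := by
  have hmeas : Measurable (_root_.betaPDFReal a b) := _root_.measurable_betaPDFReal a b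
  rw [_root_.betaMeasure,
    show (fun x => ENNReal.ofReal (_root_.betaPDFReal a b x)) =
      fun x => ((fun x => (_root_.betaPDFReal a b x).toNNReal) x : ℝ≥0∞) from rfl,
    integral_withDensity_eq_integral_smul hmeas.real_toNNReal]
  have hrw : (fun x => (_root_.betaPDFReal a b x).toNNReal • x ^ m) =
      Set.indicator (Set.Ioo (0:ℝ) 1)
        (fun x => (Real.Gamma (a + b) / (Real.Gamma a * Real.Gamma b)) *
          (x ^ (a + m - 1) * (1 - x) ^ (b - 1))) := by
    funext x
    rw [NNReal.smul_def, smul_eq_mul, Real.coe_toNNReal _ (betaPDFReal_nonneg ha hb x)]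
    unfold _root_.betaPDFReal
    by_cases h : 0 < x ∧ x < 1
    · rw [if_pos h, Set.indicator_of_mem (Set.mem_Ioo.mpr h) _]
      have : (x:ℝ) ^ m = x ^ ((m:ℝ)) := (Real.rpow_natCast x m).symm
      rw [this, show a + m - 1 = (a - 1) + m by ring, Real.rpow_add h.1]
      ring
    · rw [if_neg h, Set.indicator_of_notMem (by simpa [Set.mem_Ioo] using h) _, zero_mul]
  rw [hrw, integral_indicator measurableSet_Ioo, integral_const_mul,
    realBetaIntegral (by positivity) hb]
  have hgb : Real.Gamma b ≠ 0 := (Real.Gamma_pos_of_pos hb).ne'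
  have h1 : Real.Gamma a ≠ 0 := (Real.Gamma_pos_of_pos ha).ne'
  have h2 : Real.Gamma (a+b) ≠ 0 := (Real.Gamma_pos_of_pos (by linarith)).ne'
  have h3 : Real.Gamma (a+m+b) ≠ 0 := (Real.Gamma_pos_of_pos (by positivity)).ne'
  rw [show a + b + m = a + m + b by ring]
  field_simp

lemma HasBetaLaw.integral_pow {Ω : Type*} [MeasurableSpace Ω] {μ : Measure Ω} {X : Ω → ℝ}
    {a b : ℝ} (h : HasBetaLaw μ X a b) (ha : 0 < a) (hb : 0 < b) (m : ℕ) :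
    ∫ ω, (X ω) ^ m ∂μ = Real.Gamma (a + m) * Real.Gamma (a + b) /
        (Real.Gamma a * Real.Gamma (a + b + m)) := by
  rw [← betaMeasure_moment ha hb m, ← h.2,
    integral_map h.1.aemeasurable (by fun_prop)]

lemma HasBetaLaw.integral_one {Ω : Type*} [MeasurableSpace Ω] {μ : Measure Ω} {X : Ω → ℝ}
    {a b : ℝ} (h : HasBetaLaw μ X a b) (ha : 0 < a) (hb : 0 < b) :
    ∫ ω, (X ω) ^ 1 ∂μ = a / (a + b) := by
  rw [h.integral_pow ha hb 1]
  rw [show (a + (1:ℕ) : ℝ) = a + 1 by push_cast; ring,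
    show (a + b + (1:ℕ) : ℝ) = (a + b) + 1 by push_cast; ring,
    Real.Gamma_add_one ha.ne', Real.Gamma_add_one (by positivity : (a+b) ≠ 0)]
  have h1 : Real.Gamma a ≠ 0 := (Real.Gamma_pos_of_pos ha).ne'
  have h2 : Real.Gamma (a+b) ≠ 0 := (Real.Gamma_pos_of_pos (by linarith)).ne'
  field_simp

lemma HasBetaLaw.integral_sq {Ω : Type*} [MeasurableSpace Ω] {μ : Measure Ω} {X : Ω → ℝ}
    {a b : ℝ} (h : HasBetaLaw μ X a b) (ha : 0 < a) (hb : 0 < b) :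
    ∫ ω, (X ω) ^ 2 ∂μ = (a * (a + 1)) / ((a + b) * ((a + b) + 1)) := by
  rw [h.integral_pow ha hb 2]
  rw [show (a + (2:ℕ) : ℝ) = (a + 1) + 1 by push_cast; ring,
    show (a + b + (2:ℕ) : ℝ) = ((a + b) + 1) + 1 by push_cast; ring,
    Real.Gamma_add_one (by positivity : (a+1) ≠ 0),
    Real.Gamma_add_one (by positivity : ((a+b)+1) ≠ 0),
    Real.Gamma_add_one ha.ne', Real.Gamma_add_one (by positivity : (a+b) ≠ 0)]
  have h1 : Real.Gamma a ≠ 0 := (Real.Gamma_pos_of_pos ha).ne'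
  have h2 : Real.Gamma (a+b) ≠ 0 := (Real.Gamma_pos_of_pos (by linarith)).ne'
  field_simp

lemma indep_integral_prod {Ω : Type*} [MeasurableSpace Ω] (μ : Measure Ω)
    [IsProbabilityMeasure μ] (r : ℕ) (W : ℕ → Ω → ℝ)
    (hmeas : ∀ k, k < r → Measurable (W k))
    (hind : iIndepFun (fun k : Fin r => W k) μ) :
    ∀ n, n ≤ r → ∫ ω, ∏ k ∈ Finset.range n, W k ω ∂μ =
      ∏ k ∈ Finset.range n, ∫ ω, W k ω ∂μ := by
  intro n
  induction n with
  | zero => intro _; simp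
  | succ n ih =>
    intro hn
    have hn' : n < r := hn
    set s : Finset (Fin r) :=
      (Finset.range n).attachFin (fun m hm => (Finset.mem_range.mp hm).trans hn') with hs
    have hni : (⟨n, hn'⟩ : Fin r) ∉ s := by
      simp [hs, Finset.mem_attachFin]
    have key : IndepFun (∏ k ∈ s, (fun k : Fin r => W k) k) (W n) μ :=
      hind.indepFun_finset_prod_of_notMem (fun k => hmeas k k.isLt) hni
    have hps : (∏ k ∈ s, (fun k : Fin r => W k) k) =
        fun ω => ∏ k ∈ Finset.range n, W k ω := by
      funext ω
      rw [Finset.prod_apply]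
      exact Finset.prod_bij (fun a _ => (a : ℕ))
        (by intro a ha; simpa [hs, Finset.mem_attachFin] using ha)
        (by intro a _ b _ h; exact Fin.ext h)
        (by intro b hb; exact ⟨⟨b, (Finset.mem_range.mp hb).trans hn'⟩,
          by simpa [hs, Finset.mem_attachFin] using hb, rfl⟩)
        (fun _ _ => rfl)
    rw [hps] at key
    have hXm : Measurable fun ω => ∏ k ∈ Finset.range n, W k ω :=
      Finset.measurable_prod _ (fun k hk => hmeas k ((Finset.mem_range.mp hk).trans hn'))
    have := key.integral_mul_eq_mul_integral hXm.aestronglyMeasurable (hmeas n hn').aestronglyMeasurable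
    simp_rw [Finset.prod_range_succ]
    calc ∫ ω, (∏ k ∈ Finset.range n, W k ω) * W n ω ∂μ
        = ∫ ω, ((fun ω => ∏ k ∈ Finset.range n, W k ω) * W n) ω ∂μ := by
          simp [Pi.mul_apply]
      _ = (∫ ω, ∏ k ∈ Finset.range n, W k ω ∂μ) * ∫ ω, W n ω ∂μ := this
      _ = (∏ k ∈ Finset.range n, ∫ ω, W k ω ∂μ) * ∫ ω, W n ω ∂μ := by
          rw [ih (le_of_lt hn')]

lemma teleprod (g : ℕ → ℝ) : ∀ n m : ℕ, m ≤ n → (∀ k, m ≤ k → k ≤ n → g k ≠ 0) →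
    ∏ k ∈ Finset.Ico m n, (g k / g (k + 1)) = g m / g n := by
  intro n m hmn
  induction n, hmn using Nat.le_induction with
  | base => intro hg; simp [div_self (hg m le_rfl le_rfl)]
  | succ n hmn ih =>
    intro hg
    rw [Finset.prod_Ico_succ_top hmn, ih (fun k h1 h2 => hg k h1 (h2.trans (Nat.le_succ n)))]
    rw [div_mul_div_comm]
    rw [mul_comm (g m) (g n), mul_div_mul_left _ _ (hg n (hmn) (Nat.le_succ n))]

theorem H2_multivariate_crossMoment {Ω : Type*} [MeasurableSpace Ω] (μ : Measure Ω)
    [IsProbabilityMeasure μ] (r : ℕ) (hr : 2 ≤ r) (α : ℕ → ℝ)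
    (hα : ∀ i, 1 ≤ i → i ≤ r → 0 < α i) (V : ℕ → Ω → ℝ)
    (h0 : HasBetaLaw μ (V 0) 1 (α 1))
    (hk : ∀ k, 1 ≤ k → k ≤ r - 1 →
      HasBetaLaw μ (V k) (1 + ∑ j ∈ Finset.Icc 1 k, α j) (α (k + 1)))
    (hind : iIndepFun (fun k : Fin r => V k) μ)
    (i j : ℕ) (hi : 1 ≤ i) (hij : i < j) (hj : j ≤ r) :
    ∫ ω, (∏ k ∈ Finset.range (r - i + 1), V k ω) * (∏ k ∈ Finset.range (r - j + 1), V k ω) ∂μ =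
      2 / ((2 + ∑ l ∈ Finset.Icc 1 (r - j + 1), α l) * (1 + ∑ l ∈ Finset.Icc 1 (r - i + 1), α l)) := by
  set m := r - j with hm
  set n' := r - i with hn'
  have hmn : m + 1 ≤ n' := by omega
  have hn'r : n' + 1 ≤ r := by omega
  set A : ℕ → ℝ := fun k => 1 + ∑ l ∈ Finset.Icc 1 k, α l with hA
  have hA0 : A 0 = 1 := by simp [hA]
  have hApos : ∀ k, k ≤ r → 0 < A k := by
    intro k hk'
    have hsum : 0 ≤ ∑ l ∈ Finset.Icc 1 k, α l := Finset.sum_nonneg fun l hl =>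
      (hα l (Finset.mem_Icc.mp hl).1 ((Finset.mem_Icc.mp hl).2.trans hk')).le
    simp only [hA]; linarith
  have hAsucc : ∀ k : ℕ, A (k + 1) = A k + α (k + 1) := by
    intro k
    have := Finset.sum_Icc_succ_top (a := 1) (b := k) (by omega) α
    simp only [hA, this]; ring
  have hLaw : ∀ k, k < r → HasBetaLaw μ (V k) (A k) (α (k + 1)) := by
    intro k hkr
    cases k with
    | zero => rw [hA0]; exact h0
    | succ k => exact hk (k + 1) (by omega) (by omega)
  have E1 : ∀ k, k < r → ∫ ω, (V k ω) ^ 1 ∂μ = A k / A (k + 1) := by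
    intro k hkr
    rw [(hLaw k hkr).integral_one (hApos k hkr.le) (hα (k+1) (by omega) (by omega)),
      ← hAsucc k]
  have E2 : ∀ k, k < r → ∫ ω, (V k ω) ^ 2 ∂μ =
      (A k * (A k + 1)) / (A (k + 1) * (A (k + 1) + 1)) := by
    intro k hkr
    rw [(hLaw k hkr).integral_sq (hApos k hkr.le) (hα (k+1) (by omega) (by omega)),
      ← hAsucc k]
  set e : ℕ → ℕ := fun k => if k < m + 1 then 2 else 1 with he
  set W : ℕ → Ω → ℝ := fun k ω => (V k ω) ^ e k with hW
  have hWmeas : ∀ k, k < r → Measurable (W k) := fun k hkr => ((hLaw k hkr).1.pow_const _)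
  have hWind : iIndepFun (fun k : Fin r => W k) μ :=
    hind.comp (fun k x => x ^ e k.val) (fun k => measurable_id.pow_const _)
  have hpoint : ∀ ω, (∏ k ∈ Finset.range (n' + 1), V k ω) *
      (∏ k ∈ Finset.range (m + 1), V k ω) = ∏ k ∈ Finset.range (n' + 1), W k ω := by
    intro ω
    rw [← Finset.prod_range_mul_prod_Ico (fun k => V k ω) (show m + 1 ≤ n' + 1 by omega),
      ← Finset.prod_range_mul_prod_Ico (fun k => W k ω) (show m + 1 ≤ n' + 1 by omega)]
    have h2 : ∏ k ∈ Finset.range (m + 1), W k ω =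
        ∏ k ∈ Finset.range (m + 1), (V k ω * V k ω) :=
      Finset.prod_congr rfl fun k hkm => by
        have hk' := Finset.mem_range.mp hkm
        simp [hW, he, Finset.mem_range.mp hkm, pow_two]; intro h; omega
    have h1 : ∏ k ∈ Finset.Ico (m + 1) (n' + 1), W k ω =
        ∏ k ∈ Finset.Ico (m + 1) (n' + 1), V k ω :=
      Finset.prod_congr rfl fun k hkm => by
        have : ¬ k < m + 1 := by have := (Finset.mem_Ico.mp hkm).1; omega
        simp [hW, he, this]; intro h; omega
    rw [h2, h1, Finset.prod_mul_distrib]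
    ring
  have hstep : ∫ ω, (∏ k ∈ Finset.range (n' + 1), V k ω) *
      (∏ k ∈ Finset.range (m + 1), V k ω) ∂μ =
      ∏ k ∈ Finset.range (n' + 1), ∫ ω, W k ω ∂μ := by
    rw [show (fun ω => (∏ k ∈ Finset.range (n' + 1), V k ω) *
        (∏ k ∈ Finset.range (m + 1), V k ω)) = fun ω => ∏ k ∈ Finset.range (n' + 1), W k ω
      from funext hpoint]
    exact indep_integral_prod μ r W hWmeas hWind (n' + 1) hn'r
  rw [hstep]
  have hsplit : ∏ k ∈ Finset.range (n' + 1), ∫ ω, W k ω ∂μ =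
      (∏ k ∈ Finset.range (m + 1), ∫ ω, W k ω ∂μ) *
      ∏ k ∈ Finset.Ico (m + 1) (n' + 1), ∫ ω, W k ω ∂μ :=
    (Finset.prod_range_mul_prod_Ico _ (by omega)).symm
  set g2 : ℕ → ℝ := fun k => A k * (A k + 1) with hg2
  have hg2ne : ∀ k, k ≤ r → g2 k ≠ 0 := by
    intro k hk'
    have := hApos k hk'
    simp only [hg2]
    positivity
  have hAne : ∀ k, k ≤ r → A k ≠ 0 := fun k hk' => (hApos k hk').ne'
  have hP2 : ∏ k ∈ Finset.range (m + 1), ∫ ω, W k ω ∂μ = g2 0 / g2 (m + 1) := by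
    rw [Finset.range_eq_Ico]
    rw [Finset.prod_congr rfl (fun k hkm => ?_), teleprod g2 (m + 1) 0 (by omega)
      (fun k _ h2' => hg2ne k (by omega))]
    have hkm' := (Finset.mem_Ico.mp hkm).2
    have hkr : k < r := by omega
    have : W k = fun ω => (V k ω) ^ 2 := by
      funext ω; simp [hW, he, hkm']; intro h; omega
    rw [this, E2 k hkr]
  have hP1 : ∏ k ∈ Finset.Ico (m + 1) (n' + 1), ∫ ω, W k ω ∂μ = A (m + 1) / A (n' + 1) := by
    rw [Finset.prod_congr rfl (fun k hkm => ?_), teleprod A (n' + 1) (m + 1) (by omega)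
      (fun k _ h2' => hAne k (by omega))]
    have hkm1 := (Finset.mem_Ico.mp hkm).1
    have hkm2 := (Finset.mem_Ico.mp hkm).2
    have hkr : k < r := by omega
    have hnk : ¬ k < m + 1 := by omega
    have : W k = fun ω => (V k ω) ^ 1 := by
      funext ω; simp [hW, he, hnk]; intro h; omega
    rw [this, E1 k hkr]
  rw [hsplit, hP2, hP1]
  have hg20 : g2 0 = 2 := by rw [hg2]; simp only [hA0]; norm_num
  have hAm : A (m + 1) ≠ 0 := hAne (m + 1) (by omega)
  have hAn : A (n' + 1) ≠ 0 := hAne (n' + 1) (by omega)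
  have hAm1 : A (m + 1) + 1 ≠ 0 := by have := hApos (m + 1) (by omega); positivity
  have hgoal : g2 0 / g2 (m + 1) * (A (m + 1) / A (n' + 1)) =
      2 / ((A (m + 1) + 1) * A (n' + 1)) := by
    rw [hg20, hg2]
    field_simp
  rw [hgoal]
  have h2A : (2 : ℝ) + ∑ l ∈ Finset.Icc 1 (m + 1), α l = A (m + 1) + 1 := by
    simp only [hA]; ring
  have h1A : (1 : ℝ) + ∑ l ∈ Finset.Icc 1 (n' + 1), α l = A (n' + 1) := by
    simp only [hA]
  rw [h2A, h1A]
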